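/- Let X be a geodesic δ-hyperbolic space and let σ : [a,b] → X be an L-local geodesic with L > 100δ (i.e., the restriction of σ to any subinterval of length at most L is a geodesic). Then σ is a global (k,0)-quasi-geodesic for some constant k depending only on L/δ; in particular, d(σ(s),σ(t)) ≥ (L−8δ)/(L+8δ) ·|s−t| − cδ for all s,t and an absolute constant c, and σ is contained in a uniformly bounded neighbourhood (depending only on δ) of any geodesic joining its endpoints. -/

import Mathlib

/-- `γ` parametrizes a geodesic from `x` to `x'` (by arc length on
`[0, dist x x']`). -/
def IsGeodesicFrom {X : Type} [MetricSpace X] (γ : ℝ → X) (x x' : X) : Prop :=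
  γ 0 = x ∧ γ (dist x x') = x' ∧
    ∀ s ∈ Set.Icc (0 : ℝ) (dist x x'), ∀ t ∈ Set.Icc (0 : ℝ) (dist x x'),
      dist (γ s) (γ t) = |s - t|

section Aux

variable {X : Type} [MetricSpace X] {δ : ℝ}

/-- Core induction: along a chain with gaps `> 3δ` and vanishing Gromov
products of consecutive triples, the Gromov product `(p 0, p (i+1))_{p i}`
stays `≤ δ`. -/
lemma chainA (hδ0 : 0 ≤ δ)
    (hyp : ∀ x y z t : X,
      (dist t x + dist t z - dist x z) / 2 ≥
        min ((dist t x + dist t y - dist x y) / 2)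
            ((dist t y + dist t z - dist y z) / 2) - δ)
    (p : ℕ → X) (N : ℕ)
    (hgap : ∀ i, i + 1 ≤ N → 3 * δ < dist (p i) (p (i + 1)))
    (hzero : ∀ i, i + 2 ≤ N →
      dist (p i) (p (i + 2)) = dist (p i) (p (i + 1)) + dist (p (i + 1)) (p (i + 2)))
    : ∀ i, i + 1 ≤ N →
      dist (p i) (p 0) + dist (p i) (p (i + 1)) - dist (p 0) (p (i + 1)) ≤ 2 * δ := by
  intro i
  induction i with
  | zero =>
    intro _
    simp [dist_comm]
    linarith
  | succ j ih =>
    intro hle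
    have ihj := ih (by omega)
    have hz := hzero j (by omega)
    have hg := hgap j (by omega)
    have hmin := hyp (p j) (p 0) (p (j + 2)) (p (j + 1))
    have c1 := dist_comm (p j) (p (j + 1))
    have c2 := dist_comm (p j) (p 0)
    have c3 := dist_comm (p 0) (p (j + 1))
    have c4 := dist_comm (p (j + 1)) (p (j + 2))
    rcases le_total ((dist (p (j+1)) (p j) + dist (p (j+1)) (p 0) - dist (p j) (p 0)) / 2)
        ((dist (p (j+1)) (p 0) + dist (p (j+1)) (p (j+2)) - dist (p 0) (p (j+2))) / 2) with hc | hc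
    · rw [min_eq_left hc] at hmin
      show dist (p (j+1)) (p 0) + dist (p (j+1)) (p (j+2)) - dist (p 0) (p (j+2)) ≤ 2 * δ
      linarith
    · rw [min_eq_right hc] at hmin
      show dist (p (j+1)) (p 0) + dist (p (j+1)) (p (j+2)) - dist (p 0) (p (j+2)) ≤ 2 * δ
      linarith

/-- Lower bound on the endpoint distance of a chain. -/
lemma chainB (hδ0 : 0 ≤ δ)
    (hyp : ∀ x y z t : X,
      (dist t x + dist t z - dist x z) / 2 ≥
        min ((dist t x + dist t y - dist x y) / 2)
            ((dist t y + dist t z - dist y z) / 2) - δ)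
    (p : ℕ → X) (N : ℕ)
    (hgap : ∀ i, i + 1 ≤ N → 3 * δ < dist (p i) (p (i + 1)))
    (hzero : ∀ i, i + 2 ≤ N →
      dist (p i) (p (i + 2)) = dist (p i) (p (i + 1)) + dist (p (i + 1)) (p (i + 2)))
    : ∀ n, n ≤ N →
      (∑ i ∈ Finset.range n, dist (p i) (p (i + 1))) - 2 * n * δ ≤ dist (p 0) (p n) := by
  intro n
  induction n with
  | zero => simp
  | succ j ih =>
    intro hle
    have ihj := ih (by omega)
    have hA := chainA hδ0 hyp p N hgap hzero j (by omega)
    have c2 := dist_comm (p j) (p 0)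
    rw [Finset.sum_range_succ]
    push_cast
    linarith

/-- The reversed version of `chainA`. -/
lemma chainA' (hδ0 : 0 ≤ δ)
    (hyp : ∀ x y z t : X,
      (dist t x + dist t z - dist x z) / 2 ≥
        min ((dist t x + dist t y - dist x y) / 2)
            ((dist t y + dist t z - dist y z) / 2) - δ)
    (p : ℕ → X) (N : ℕ)
    (hgap : ∀ i, i + 1 ≤ N → 3 * δ < dist (p i) (p (i + 1)))
    (hzero : ∀ i, i + 2 ≤ N →
      dist (p i) (p (i + 2)) = dist (p i) (p (i + 1)) + dist (p (i + 1)) (p (i + 2)))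
    : ∀ k, k + 1 ≤ N →
      dist (p (k + 1)) (p N) + dist (p (k + 1)) (p k) - dist (p N) (p k) ≤ 2 * δ := by
  intro k hk
  set q : ℕ → X := fun i => p (N - i) with hq
  have hgap' : ∀ i, i + 1 ≤ N → 3 * δ < dist (q i) (q (i + 1)) := by
    intro i hi
    have e1 : N - i = (N - i - 1) + 1 := by omega
    have e2 : N - (i + 1) = N - i - 1 := by omega
    simp only [hq, e2]
    rw [e1, dist_comm]
    exact hgap _ (by omega)
  have hzero' : ∀ i, i + 2 ≤ N →
      dist (q i) (q (i + 2)) = dist (q i) (q (i + 1)) + dist (q (i + 1)) (q (i + 2)) := by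
    intro i hi
    obtain ⟨m, hm⟩ : ∃ m, N = i + 2 + m := ⟨N - (i + 2), by omega⟩
    have e0 : N - i = m + 2 := by omega
    have e1 : N - (i + 1) = m + 1 := by omega
    have e2 : N - (i + 2) = m := by omega
    simp only [hq, e0, e1, e2]
    have := hzero m (by omega)
    rw [dist_comm (p m) (p (m+2)), dist_comm (p m) (p (m+1)),
      dist_comm (p (m+1)) (p (m+2))] at this
    linarith
  have := chainA hδ0 hyp q N hgap' hzero' (N - k - 1) (by omega)
  have e1 : N - (N - k - 1) = k + 1 := by omega
  have e2 : N - (N - k - 1 + 1) = k := by omega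
  have e3 : N - 0 = N := rfl
  simp only [hq, e1, e2, e3] at this
  exact this

/-- At any interior node of a chain, the Gromov product of the two endpoints
is at most `2δ`. -/
lemma junction (hδ0 : 0 ≤ δ)
    (hyp : ∀ x y z t : X,
      (dist t x + dist t z - dist x z) / 2 ≥
        min ((dist t x + dist t y - dist x y) / 2)
            ((dist t y + dist t z - dist y z) / 2) - δ)
    (p : ℕ → X) (N : ℕ)
    (hgap : ∀ i, i + 1 ≤ N → 3 * δ < dist (p i) (p (i + 1)))
    (hzero : ∀ i, i + 2 ≤ N →
      dist (p i) (p (i + 2)) = dist (p i) (p (i + 1)) + dist (p (i + 1)) (p (i + 2)))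
    (k : ℕ) (hk : k + 1 ≤ N)
    : dist (p k) (p 0) + dist (p k) (p N) - dist (p 0) (p N) ≤ 4 * δ := by
  have h1 := chainA hδ0 hyp p N hgap hzero k hk
  have h2 := chainA' hδ0 hyp p N hgap hzero k hk
  have hg := hgap k hk
  have hmin := hyp (p 0) (p N) (p (k + 1)) (p k)
  have c1 := dist_comm (p k) (p 0)
  have c2 := dist_comm (p k) (p N)
  have c3 := dist_comm (p k) (p (k + 1))
  have c4 := dist_comm (p (k + 1)) (p N)
  have c5 := dist_comm (p 0) (p (k + 1))
  rcases le_total ((dist (p k) (p 0) + dist (p k) (p N) - dist (p 0) (p N)) / 2)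
      ((dist (p k) (p N) + dist (p k) (p (k+1)) - dist (p N) (p (k+1))) / 2) with hc | hc
  · rw [min_eq_left hc] at hmin
    linarith
  · rw [min_eq_right hc] at hmin
    linarith

/-- A point is within `(x,y)_p + 2δ` of any geodesic from `x` to `y`. -/
lemma near_geodesic (hδ0 : 0 ≤ δ)
    (hyp : ∀ x y z t : X,
      (dist t x + dist t z - dist x z) / 2 ≥
        min ((dist t x + dist t y - dist x y) / 2)
            ((dist t y + dist t z - dist y z) / 2) - δ)
    (γ : ℝ → X) (x y : X) (hγ : IsGeodesicFrom γ x y) (p : X) :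
    Metric.infDist p (γ '' Set.Icc (0 : ℝ) (dist x y)) ≤
      (dist p x + dist p y - dist x y) / 2 + 2 * δ := by
  obtain ⟨h0, hD, hiso⟩ := hγ
  set D := dist x y with hDdef
  set u : ℝ := (dist x p + D - dist p y) / 2 with hu
  have cpx := dist_comm p x
  have cpy := dist_comm p y
  have hu0 : 0 ≤ u := by
    have := dist_triangle p x y
    rw [dist_comm p x] at this
    simp only [hu]
    linarith
  have huD : u ≤ D := by
    have := dist_triangle x y p
    simp only [hu]
    linarith
  have hmemD : D ∈ Set.Icc (0:ℝ) D := ⟨dist_nonneg, le_refl D⟩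
  have hmem0 : (0:ℝ) ∈ Set.Icc (0:ℝ) D := ⟨le_refl 0, dist_nonneg⟩
  have hmemu : u ∈ Set.Icc (0:ℝ) D := ⟨hu0, huD⟩
  have hxw : dist x (γ u) = u := by
    have := hiso 0 hmem0 u hmemu
    rw [h0] at this
    rw [this, abs_of_nonpos (by linarith)]
    ring
  have hwy : dist (γ u) y = D - u := by
    have := hiso u hmemu D hmemD
    rw [hD] at this
    rw [this, abs_of_nonpos (by linarith)]
    ring
  have h4 := hyp p y (γ u) x
  have hA : (dist x p + dist x y - dist p y) / 2 = u := by rw [hu, ← hDdef]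
  have hB : (dist x y + dist x (γ u) - dist y (γ u)) / 2 = u := by
    rw [dist_comm y (γ u), hxw, hwy, ← hDdef]; ring
  rw [hA, hB, min_self] at h4
  have hle : dist p (γ u) ≤ (dist p x + dist p y - D) / 2 + 2 * δ := by
    have cw := dist_comm x (γ u)
    simp only [hu] at h4 ⊢
    linarith [hxw, h4]
  calc Metric.infDist p (γ '' Set.Icc (0 : ℝ) (dist x y))
      ≤ dist p (γ u) := Metric.infDist_le_dist_of_mem ⟨u, hmemu, rfl⟩
    _ ≤ _ := hle

/-- Arithmetic: subdividing an interval of length `x > 3δ` into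
`⌈x/ℓ⌉` equal parts yields parts of size in `(3δ, ℓ]`. -/
lemma gap_facts {ℓ x : ℝ} (hδ0 : 0 ≤ δ) (hℓ : 12 * δ < ℓ) (hx : 3 * δ < x) :
    1 ≤ ⌈x / ℓ⌉₊ ∧ 3 * δ < x / ⌈x / ℓ⌉₊ ∧ x / ⌈x / ℓ⌉₊ ≤ ℓ ∧
      (⌈x / ℓ⌉₊ : ℝ) * (x / ⌈x / ℓ⌉₊) = x := by
  have hℓ0 : 0 < ℓ := by linarith
  have hx0 : 0 < x := by linarith
  have hy0 : 0 < x / ℓ := div_pos hx0 hℓ0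
  have hn1 : 1 ≤ ⌈x / ℓ⌉₊ := Nat.one_le_ceil_iff.mpr hy0
  set n := ⌈x / ℓ⌉₊ with hn
  have hnR : (0:ℝ) < n := by exact_mod_cast Nat.lt_of_lt_of_le Nat.zero_lt_one hn1
  have hle : x / ℓ ≤ n := Nat.le_ceil _
  have hgle : x / n ≤ ℓ := by
    rw [div_le_iff₀ hnR]
    calc x = (x / ℓ) * ℓ := by field_simp
    _ ≤ n * ℓ := by nlinarith
    _ = ℓ * n := by ring
  have hlt : (n:ℝ) < x / ℓ + 1 := by
    have := Nat.ceil_lt_add_one (le_of_lt hy0)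
    exact_mod_cast this
  have hggt : 3 * δ < x / n := by
    rcases eq_or_lt_of_le hn1 with h1 | h2
    · rw [← h1]
      simpa using hx
    · have hn2 : (2:ℝ) ≤ n := by exact_mod_cast h2
      have hxgt : ((n:ℝ) - 1) * ℓ < x := by
        have : (n:ℝ) - 1 < x / ℓ := by linarith
        calc ((n:ℝ) - 1) * ℓ < (x / ℓ) * ℓ := by nlinarith
        _ = x := by field_simp
      rw [lt_div_iff₀ hnR]
      nlinarith
  exact ⟨hn1, hggt, hgle, by field_simp⟩

/-- Final arithmetic for `part1`. -/
lemma final_arith {T L n δ d : ℝ} (hδ0 : 0 ≤ δ) (hL : 100 * δ < L) (hT0 : 0 < T)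
    (hn0 : 0 ≤ n) (hn3 : n * L ≤ 3 * T) (hd : T - 2 * n * δ ≤ d) :
    (L - 8 * δ) / (L + 8 * δ) * T ≤ d := by
  have hpos : (0:ℝ) < L + 8 * δ := by linarith
  rw [div_mul_eq_mul_div, div_le_iff₀ hpos]
  have hp2 : n * δ * L ≤ 3 * T * δ := by nlinarith
  have hp3 : 1600 * (n * δ * δ) ≤ 16 * (n * δ * L) := by
    nlinarith [mul_le_mul_of_nonneg_left hL.le (mul_nonneg hn0 hδ0)]
  nlinarith [hp2, hp3, mul_nonneg hn0 hδ0]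

/-- The quasi-geodesic lower bound, for `s ≤ t`. -/
lemma part1 {L a b : ℝ} (σ : ℝ → X) (hδ0 : 0 ≤ δ)
    (hyp : ∀ x y z t : X,
      (dist t x + dist t z - dist x z) / 2 ≥
        min ((dist t x + dist t y - dist x y) / 2)
            ((dist t y + dist t z - dist y z) / 2) - δ)
    (hL : 100 * δ < L)
    (hloc : ∀ s ∈ Set.Icc a b, ∀ t ∈ Set.Icc a b, |s - t| ≤ L → dist (σ s) (σ t) = |s - t|)
    {s t : ℝ} (hs : s ∈ Set.Icc a b) (ht : t ∈ Set.Icc a b) (hst : s ≤ t) :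
    (L - 8 * δ) / (L + 8 * δ) * (t - s) ≤ dist (σ s) (σ t) := by
  have hL0 : 0 < L := by linarith
  have hpos : (0:ℝ) < L + 8 * δ := by linarith
  rcases le_or_gt (t - s) L with hcase | hcase
  · have hd : dist (σ s) (σ t) = t - s := by
      rw [hloc s hs t ht (by rw [abs_of_nonpos (by linarith)]; linarith),
        abs_of_nonpos (by linarith)]
      ring
    have hratio : (L - 8 * δ) / (L + 8 * δ) ≤ 1 := by
      rw [div_le_one hpos]; linarith
    rw [hd]
    nlinarith [sub_nonneg.mpr hst]
  · set T := t - s with hT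
    have hT0 : 0 < T := by linarith
    set n := ⌈T / (L / 2)⌉₊ with hn
    have hy2 : 2 < T / (L / 2) := by
      rw [lt_div_iff₀ (by linarith)]
      linarith
    have hn1 : 1 ≤ n := Nat.one_le_ceil_iff.mpr (by linarith)
    have hnR : (0:ℝ) < n := by exact_mod_cast Nat.lt_of_lt_of_le Nat.zero_lt_one hn1
    set g := T / n with hg
    have hng : (n:ℝ) * g = T := by rw [hg]; field_simp
    have hgpos : 0 < g := div_pos hT0 hnR
    have hgle : g ≤ L / 2 := by
      have hle : T / (L / 2) ≤ n := Nat.le_ceil _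
      rw [hg, div_le_iff₀ hnR]
      calc T = (T / (L/2)) * (L/2) := by field_simp
      _ ≤ n * (L/2) := by nlinarith
      _ = L/2 * n := by ring
    have hnlt : (n:ℝ) < T / (L / 2) + 1 := by
      exact_mod_cast Nat.ceil_lt_add_one (by positivity : (0:ℝ) ≤ T / (L/2))
    have hn3 : (n:ℝ) * L ≤ 3 * T := by
      have : T / (L/2) * (L/2) = T := by field_simp
      nlinarith [hnlt, this]
    have hgge : L / 3 ≤ g := by
      rw [hg, le_div_iff₀ hnR]
      nlinarith
    have hg3δ : 3 * δ < g := by linarith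
    set p : ℕ → X := fun i => σ (s + i * g) with hp
    have hmem : ∀ i : ℕ, (i : ℝ) ≤ n → s + i * g ∈ Set.Icc a b := by
      intro i hi
      constructor
      · have : 0 ≤ (i:ℝ) * g := mul_nonneg (Nat.cast_nonneg i) hgpos.le
        linarith [hs.1]
      · have : (i:ℝ) * g ≤ n * g := mul_le_mul_of_nonneg_right hi hgpos.le
        have := ht.2
        linarith [hng]
    have hgapeq : ∀ i : ℕ, i + 1 ≤ n → dist (p i) (p (i + 1)) = g := by
      intro i hi
      have hi' : (i:ℝ) + 1 ≤ n := by exact_mod_cast hi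
      have h1 : s + (i:ℝ) * g ∈ Set.Icc a b := hmem i (by linarith)
      have h2 : s + ((i+1:ℕ):ℝ) * g ∈ Set.Icc a b := hmem (i+1) (by exact_mod_cast hi)
      have habs : |s + (i:ℝ) * g - (s + ((i+1:ℕ):ℝ) * g)| = g := by
        push_cast
        rw [show s + (i:ℝ)*g - (s + ((i:ℝ)+1)*g) = -g by ring, abs_neg, abs_of_nonneg hgpos.le]
      have := hloc _ h1 _ h2 (by rw [habs]; linarith)
      rw [habs] at this
      exact this
    have hgap : ∀ i, i + 1 ≤ n → 3 * δ < dist (p i) (p (i + 1)) := by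
      intro i hi
      rw [hgapeq i hi]
      exact hg3δ
    have hzero : ∀ i, i + 2 ≤ n →
        dist (p i) (p (i + 2)) = dist (p i) (p (i + 1)) + dist (p (i + 1)) (p (i + 2)) := by
      intro i hi
      have hi' : (i:ℝ) + 2 ≤ n := by exact_mod_cast hi
      have h1 : s + (i:ℝ) * g ∈ Set.Icc a b := hmem i (by linarith)
      have h2 : s + ((i+2:ℕ):ℝ) * g ∈ Set.Icc a b := hmem (i+2) (by exact_mod_cast hi)
      have habs : |s + (i:ℝ) * g - (s + ((i+2:ℕ):ℝ) * g)| = 2 * g := by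
        push_cast
        rw [show s + (i:ℝ)*g - (s + ((i:ℝ)+2)*g) = -(2*g) by ring, abs_neg,
          abs_of_nonneg (by linarith)]
      have hd2 := hloc _ h1 _ h2 (by rw [habs]; linarith)
      rw [habs] at hd2
      rw [hgapeq i (by omega), hgapeq (i+1) (by omega)]
      show dist (σ (s + (i:ℝ)*g)) (σ (s + ((i+2:ℕ):ℝ)*g)) = g + g
      rw [hd2]; ring
    have hB := chainB hδ0 hyp p n hgap hzero n le_rfl
    have hsum : (∑ i ∈ Finset.range n, dist (p i) (p (i + 1))) = n * g := by
      rw [Finset.sum_congr rfl (fun i hi => hgapeq i (Finset.mem_range.mp hi)),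
        Finset.sum_const, Finset.card_range, nsmul_eq_mul]
    have hp0 : p 0 = σ s := by
      show σ (s + (0:ℕ) * g) = σ s
      norm_num
    have hpn : p n = σ t := by
      show σ (s + (n:ℝ) * g) = σ t
      congr 1
      linarith [hng]
    rw [hsum, hp0, hpn, hng] at hB
    exact final_arith hδ0 hL hT0 hnR.le hn3 hB

end Aux

/-- Stability of local geodesics: in a geodesic δ-hyperbolic space, an
L-local geodesic with L > 100δ is a global quasi-geodesic with multiplicative
constant (L+8δ)/(L−8δ), and stays within a uniformly bounded (in δ)
neighbourhood of any geodesic joining its endpoints. -/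
theorem local_geodesics_are_quasi_geodesics :
    ∃ c C : ℝ, 0 ≤ c ∧ 0 ≤ C ∧
      ∀ (X : Type) [MetricSpace X], ∀ δ : ℝ, 0 ≤ δ →
        (∀ x y z t : X,
          (dist t x + dist t z - dist x z) / 2 ≥
            min ((dist t x + dist t y - dist x y) / 2)
                ((dist t y + dist t z - dist y z) / 2) - δ) →
        (∀ x y : X, ∃ γ : ℝ → X, IsGeodesicFrom γ x y) →
        ∀ (L a b : ℝ) (σ : ℝ → X), 100 * δ < L → a ≤ b →
        (∀ s ∈ Set.Icc a b, ∀ t ∈ Set.Icc a b,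
          |s - t| ≤ L → dist (σ s) (σ t) = |s - t|) →
        (∀ s ∈ Set.Icc a b, ∀ t ∈ Set.Icc a b,
          (L - 8 * δ) / (L + 8 * δ) * |s - t| - c * δ ≤ dist (σ s) (σ t)) ∧
        (∀ γ : ℝ → X, IsGeodesicFrom γ (σ a) (σ b) →
          ∀ s ∈ Set.Icc a b,
            Metric.infDist (σ s)
              (γ '' Set.Icc (0 : ℝ) (dist (σ a) (σ b))) ≤ C * δ) := by
  refine ⟨0, 4, le_rfl, by norm_num, ?_⟩
  intro X _ δ hδ0 hyp _hgeo L a b σ hL hab hloc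
  have hL0 : 0 < L := by linarith
  constructor
  · -- part 1
    intro s hs t ht
    rcases le_total s t with h | h
    · have hp := part1 σ hδ0 hyp hL hloc hs ht h
      have habs : |s - t| = t - s := by rw [abs_of_nonpos (by linarith)]; ring
      rw [habs, zero_mul, sub_zero]
      exact hp
    · have hp := part1 σ hδ0 hyp hL hloc ht hs h
      have habs : |s - t| = s - t := abs_of_nonneg (by linarith)
      rw [habs, zero_mul, sub_zero, dist_comm]
      exact hp
  · -- part 2
    intro γ hγ s hs
    rcases le_or_gt (s - a) (3 * δ) with hsa | hsa
    · -- s is close to a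
      have hmem : γ 0 ∈ γ '' Set.Icc (0:ℝ) (dist (σ a) (σ b)) :=
        ⟨0, ⟨le_refl 0, dist_nonneg⟩, rfl⟩
      have hd : dist (σ s) (γ 0) ≤ 3 * δ := by
        rw [hγ.1]
        have habs : |s - a| = s - a := abs_of_nonneg (by linarith [hs.1])
        rw [hloc s hs a ⟨le_refl a, hab⟩ (by rw [habs]; linarith), habs]
        exact hsa
      calc Metric.infDist (σ s) (γ '' Set.Icc (0:ℝ) (dist (σ a) (σ b)))
          ≤ dist (σ s) (γ 0) := Metric.infDist_le_dist_of_mem hmem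
        _ ≤ 4 * δ := by linarith
    rcases le_or_gt (b - s) (3 * δ) with hbs | hbs
    · -- s is close to b
      have hmem : γ (dist (σ a) (σ b)) ∈ γ '' Set.Icc (0:ℝ) (dist (σ a) (σ b)) :=
        ⟨dist (σ a) (σ b), ⟨dist_nonneg, le_refl _⟩, rfl⟩
      have hd : dist (σ s) (γ (dist (σ a) (σ b))) ≤ 3 * δ := by
        rw [hγ.2.1]
        have habs : |s - b| = b - s := by
          rw [abs_of_nonpos (by linarith [hs.2])]; ring
        rw [hloc s hs b ⟨hab, le_refl b⟩ (by rw [habs]; linarith), habs]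
        exact hbs
      calc Metric.infDist (σ s) (γ '' Set.Icc (0:ℝ) (dist (σ a) (σ b)))
          ≤ dist (σ s) (γ (dist (σ a) (σ b))) := Metric.infDist_le_dist_of_mem hmem
        _ ≤ 4 * δ := by linarith
    · -- main case: build a two-sided chain with node at s
      set ℓ := L / 2 with hℓdef
      have hℓ12 : 12 * δ < ℓ := by rw [hℓdef]; linarith
      obtain ⟨hn1, hgl3, hglℓ, hngl⟩ := gap_facts (ℓ := ℓ) (x := s - a) hδ0 hℓ12 hsa
      obtain ⟨hm1, hgr3, hgrℓ, hmgr⟩ := gap_facts (ℓ := ℓ) (x := b - s) hδ0 hℓ12 hbs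
      set n := ⌈(s - a) / ℓ⌉₊ with hn
      set m := ⌈(b - s) / ℓ⌉₊ with hm
      set gl := (s - a) / n with hgl
      set gr := (b - s) / m with hgr
      set N := n + m with hN
      have hgl0 : 0 < gl := by linarith
      have hgr0 : 0 < gr := by linarith
      set τ : ℕ → ℝ := fun i => if i ≤ n then a + i * gl else s + ((i - n : ℕ) : ℝ) * gr
        with hτ
      have hτ0 : τ 0 = a := by simp [hτ]
      have hτn : τ n = s := by
        simp only [hτ, if_pos (le_refl n)]
        linarith [hngl]
      have hτN : τ N = b := by
        have hnN : ¬ (N ≤ n) := by omega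
        simp only [hτ, if_neg hnN, hN]
        have : ((n + m - n : ℕ) : ℝ) = m := by
          congr 1
          omega
        rw [this]
        rw [if_neg (by omega : ¬ (n + m ≤ n))]
        linarith [hmgr]
      have hτmem : ∀ i, i ≤ N → τ i ∈ Set.Icc a b := by
        intro i hi
        by_cases hin : i ≤ n
        · have hiR : (i:ℝ) ≤ n := by exact_mod_cast hin
          simp only [hτ, if_pos hin]
          constructor
          · nlinarith [Nat.cast_nonneg (α := ℝ) i]
          · have : (i:ℝ) * gl ≤ n * gl := by nlinarith
            have hsb := hs.2
            linarith [hngl]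
        · have hiR : ((i - n : ℕ):ℝ) ≤ m := by
            have : i - n ≤ m := by omega
            exact_mod_cast this
          simp only [hτ, if_neg hin]
          constructor
          · nlinarith [Nat.cast_nonneg (α := ℝ) (i - n), hs.1]
          · have : ((i - n:ℕ):ℝ) * gr ≤ m * gr := by nlinarith
            linarith [hmgr]
      have hstep : ∀ i, i + 1 ≤ N → τ (i + 1) - τ i = gl ∨ τ (i + 1) - τ i = gr := by
        intro i hi
        by_cases h1 : i + 1 ≤ n
        · left
          simp only [hτ, if_pos h1, if_pos (by omega : i ≤ n)]
          push_cast
          ring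
        · right
          by_cases h2 : i ≤ n
          · -- i = n
            have hieq : i = n := by omega
            rw [hieq]
            simp only [hτ]
            rw [if_neg (by omega : ¬ n + 1 ≤ n), if_pos (le_refl n)]
            have e : n + 1 - n = 1 := by omega
            rw [e]
            push_cast
            linarith [hngl]
          · simp only [hτ, if_neg h1, if_neg h2]
            have e : i + 1 - n = (i - n) + 1 := by omega
            rw [e]
            push_cast
            ring
      have hstep' : ∀ i, i + 1 ≤ N → 3 * δ < τ (i + 1) - τ i ∧ τ (i + 1) - τ i ≤ ℓ := by
        intro i hi
        rcases hstep i hi with h | h <;> rw [h] <;> constructor <;> linarith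
      set p : ℕ → X := fun i => σ (τ i) with hp
      have hgapeq : ∀ i, i + 1 ≤ N → dist (p i) (p (i + 1)) = τ (i + 1) - τ i := by
        intro i hi
        obtain ⟨hlo, hhi⟩ := hstep' i hi
        have habs : |τ i - τ (i + 1)| = τ (i + 1) - τ i := by
          rw [abs_of_nonpos (by linarith)]; ring
        have := hloc _ (hτmem i (by omega)) _ (hτmem (i+1) hi)
          (by rw [habs]; rw [hℓdef] at hhi; linarith)
        rw [habs] at this
        exact this
      have hgap : ∀ i, i + 1 ≤ N → 3 * δ < dist (p i) (p (i + 1)) := by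
        intro i hi
        rw [hgapeq i hi]
        exact (hstep' i hi).1
      have hzero : ∀ i, i + 2 ≤ N →
          dist (p i) (p (i + 2)) = dist (p i) (p (i + 1)) + dist (p (i + 1)) (p (i + 2)) := by
        intro i hi
        obtain ⟨hlo1, hhi1⟩ := hstep' i (by omega)
        obtain ⟨hlo2, hhi2⟩ := hstep' (i + 1) (by omega)
        have habs : |τ i - τ (i + 2)| = τ (i + 2) - τ i := by
          rw [abs_of_nonpos (by linarith)]; ring
        have hd2 := hloc _ (hτmem i (by omega)) _ (hτmem (i+2) hi)
          (by rw [habs]; rw [hℓdef] at hhi1 hhi2; linarith)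
        rw [habs] at hd2
        rw [hgapeq i (by omega), hgapeq (i+1) (by omega)]
        show dist (σ (τ i)) (σ (τ (i + 2))) = _
        rw [hd2]
        ring
      have hjun := junction hδ0 hyp p N hgap hzero n (by omega)
      have hp0 : p 0 = σ a := by rw [hp]; simp only []; rw [hτ0]
      have hpn : p n = σ s := by rw [hp]; simp only []; rw [hτn]
      have hpN : p N = σ b := by rw [hp]; simp only []; rw [hτN]
      rw [hp0, hpn, hpN] at hjun
      have hng := near_geodesic hδ0 hyp γ (σ a) (σ b) hγ (σ s)
      have c1 := dist_comm (σ s) (σ a)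
      have c2 := dist_comm (σ s) (σ b)
      linarith
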